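/- Let G be a graph and M = M[IAS(G)]. If every X ⊆ V has c_G(X) = min{|X|, |V−X|}, then κ(M) = n. Otherwise, κ(M) = 1 + 2·min{c_G(X) : X ⊆ V and c_G(X) < min{|X|, |V−X|}}. -/

import Mathlib

open scoped ENat

variable {V : Type*} [Fintype V] [DecidableEq V]

/-- The column of the matrix `IAS(G) = (I | A | A+I)` indexed by `(v, i)`:
`i = 0` gives `φ(v)` (identity column), `i = 1` gives `χ(v)` (column of `A`),
`i = 2` gives `ψ(v)` (column of `A + I`). -/
def iasCol (A : Matrix V V (ZMod 2)) : V × Fin 3 → V → ZMod 2 :=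
  fun p w =>
    if p.2 = 0 then (if w = p.1 then 1 else 0)
    else if p.2 = 1 then A w p.1
    else A w p.1 + (if w = p.1 then 1 else 0)

/-- The rank of a subset of the ground set `W(G) = V × Fin 3` of the isotropic
matroid: the GF(2)-rank of the corresponding set of columns. -/
noncomputable def iasRank (A : Matrix V V (ZMod 2)) (S : Set (V × Fin 3)) : ℕ :=
  Module.finrank (ZMod 2) (Submodule.span (ZMod 2) (iasCol A '' S))

/-- The connectivity function `λ(S) = r(S) + r(W - S) - r(M)`. -/
noncomputable def iasLambda (A : Matrix V V (ZMod 2)) (S : Set (V × Fin 3)) : ℕ :=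
  iasRank A S + iasRank A Sᶜ - iasRank A Set.univ

/-- Independence in the isotropic matroid. -/
def iasIndep (A : Matrix V V (ZMod 2)) (S : Set (V × Fin 3)) : Prop :=
  LinearIndependent (ZMod 2) (fun s : S => iasCol A s.1)

/-- Circuits of the isotropic matroid: minimal dependent sets. -/
def iasCircuit (A : Matrix V V (ZMod 2)) (C : Set (V × Fin 3)) : Prop :=
  ¬ iasIndep A C ∧ ∀ S ⊂ C, iasIndep A S

/-- An ordinary `k`-separation: `λ(S) < k` and `|S|, |W - S| ≥ k`. -/
def OrdinarySep (A : Matrix V V (ZMod 2)) (k : ℕ) (S : Set (V × Fin 3)) : Prop :=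
  0 < k ∧ iasLambda A S < k ∧ k ≤ S.ncard ∧ k ≤ Sᶜ.ncard

/-- A cyclic `k`-separation: `λ(S) < k` and both `S` and `W - S` are dependent. -/
def CyclicSep (A : Matrix V V (ZMod 2)) (k : ℕ) (S : Set (V × Fin 3)) : Prop :=
  0 < k ∧ iasLambda A S < k ∧ ¬ iasIndep A S ∧ ¬ iasIndep A Sᶜ

/-- A vertical `k`-separation: `λ(S) < k` and `r(S), r(W - S) ≥ k`. -/
def VerticalSep (A : Matrix V V (ZMod 2)) (k : ℕ) (S : Set (V × Fin 3)) : Prop :=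
  0 < k ∧ iasLambda A S < k ∧ k ≤ iasRank A S ∧ k ≤ iasRank A Sᶜ

/-- `τ(M) = min {k : M has an ordinary k-separation}`, with `min ∅ = ∞`. -/
noncomputable def iasTau (A : Matrix V V (ZMod 2)) : ℕ∞ :=
  sInf {k : ℕ∞ | ∃ m : ℕ, (m : ℕ∞) = k ∧ ∃ S, OrdinarySep A m S}

/-- `κ*(M) = min ({k : M has a cyclic k-separation} ∪ {|W| - r(M)})`. -/
noncomputable def iasKappaStar (A : Matrix V V (ZMod 2)) : ℕ :=
  sInf ({k : ℕ | ∃ S, CyclicSep A k S} ∪ {3 * Fintype.card V - iasRank A Set.univ})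

/-- `κ(M) = min ({k : M has a vertical k-separation} ∪ {r(M)})`. -/
noncomputable def iasKappa (A : Matrix V V (ZMod 2)) : ℕ :=
  sInf ({k : ℕ | ∃ S, VerticalSep A k S} ∪ {iasRank A Set.univ})

/-- The simple graph underlying a looped simple graph given by its adjacency matrix. -/
def toSimpleGraph (A : Matrix V V (ZMod 2)) : SimpleGraph V where
  Adj v w := v ≠ w ∧ A v w = 1 ∧ A w v = 1
  symm := ⟨fun v w ⟨h1, h2, h3⟩ => ⟨Ne.symm h1, h3, h2⟩⟩
  loopless := ⟨fun v h => h.1 rfl⟩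

/-- The open neighborhood `N_G(v)`. -/
def nbhd (A : Matrix V V (ZMod 2)) (v : V) : Set V := {u | u ≠ v ∧ A v u = 1}

/-- `v` is a pendant vertex: `N_G(v) = {w}` for some `w`. -/
def IsPendant (A : Matrix V V (ZMod 2)) (v : V) : Prop := ∃ w, nbhd A v = {w}

/-- `G` has a pair of twin vertices: `v ≠ w` with `N_G(v) - {w} = N_G(w) - {v}`. -/
def HasTwins (A : Matrix V V (ZMod 2)) : Prop :=
  ∃ v w, v ≠ w ∧ nbhd A v \ {w} = nbhd A w \ {v}

/-- The cut-rank `c_G(X)`: the GF(2)-rank of the submatrix `A[V - X, X]`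
(columns indexed by `X`, rows indexed by `V - X`). -/
noncomputable def cutRank (A : Matrix V V (ZMod 2)) (X : Set V) : ℕ :=
  Module.finrank (ZMod 2)
    (Submodule.span (ZMod 2) ((fun x : V => fun w : ↥(Xᶜ) => A w.1 x) '' X))

/-- `τ_G(X) = ⋃_{x ∈ X} τ_G(x)`, the union of the vertex triples of members of `X`. -/
def tauSet (X : Set V) : Set (V × Fin 3) := {p | p.1 ∈ X}

/-- Loop complementation at `v`. -/
def loopComp (A : Matrix V V (ZMod 2)) (v : V) : Matrix V V (ZMod 2) :=
  fun x y => A x y + if x = v ∧ y = v then 1 else 0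

/-- Simple local complementation at `v`. -/
def simpleLocalComp (A : Matrix V V (ZMod 2)) (v : V) : Matrix V V (ZMod 2) :=
  fun x y => A x y +
    if x ≠ y ∧ (x ≠ v ∧ A v x = 1) ∧ (y ≠ v ∧ A v y = 1) then 1 else 0

/-- Non-simple local complementation at `v`. -/
def nonSimpleLocalComp (A : Matrix V V (ZMod 2)) (v : V) : Matrix V V (ZMod 2) :=
  fun x y => simpleLocalComp A v x y + if x = y ∧ x ≠ v ∧ A v x = 1 then 1 else 0

/-- One local move. -/
def LocalStep (A B : Matrix V V (ZMod 2)) : Prop :=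
  ∃ v, B = loopComp A v ∨ B = simpleLocalComp A v ∨ B = nonSimpleLocalComp A v

/-- Local equivalence: a finite sequence of loop complementations and
(simple or non-simple) local complementations. -/
def LocallyEquiv (A B : Matrix V V (ZMod 2)) : Prop :=
  Relation.ReflTransGen LocalStep A B

/-- `G` has a split: a bipartition `(V₁, V₂)` of `V` with `|V₁|, |V₂| ≥ 2` such that the
GF(2)-rank of `A[V₁, V₂]` is at most 1. -/
def HasSplit (A : Matrix V V (ZMod 2)) : Prop :=
  ∃ X : Set V, 2 ≤ X.ncard ∧ 2 ≤ Xᶜ.ncard ∧ cutRank A X ≤ 1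

/-- A transverse circuit: a circuit of the isotropic matroid meeting each
vertex triple at most once. -/
def IsTransverseCircuit (A : Matrix V V (ZMod 2)) (C : Set (V × Fin 3)) : Prop :=
  iasCircuit A C ∧ ∀ p ∈ C, ∀ q ∈ C, p.1 = q.1 → p = q

/-- An isotropic `k`-separation of `G`: `|X|, |V - X| ≥ k` and `c_G(X) < k`. -/
def IsotropicSep (A : Matrix V V (ZMod 2)) (k : ℕ) (X : Set V) : Prop :=
  k ≤ X.ncard ∧ k ≤ Xᶜ.ncard ∧ cutRank A X < k

/-- The isotropic connectivity `κ_B(G)`, with `min ∅ = ∞`. -/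
noncomputable def kappaB (A : Matrix V V (ZMod 2)) : ℕ∞ :=
  sInf {j : ℕ∞ | ∃ k : ℕ, (k : ℕ∞) = j ∧ ∃ X, IsotropicSep A k X}

/-- The 5-cycle `C₅`. -/
def C5mat : Matrix (Fin 5) (Fin 5) (ZMod 2) :=
  fun i j => if (i.val + 1) % 5 = j.val ∨ (j.val + 1) % 5 = i.val then 1 else 0

/-- The wheel `W₅` : a 5-cycle on `{0,…,4}` plus a hub `5` adjacent to all. -/
def W5mat : Matrix (Fin 6) (Fin 6) (ZMod 2) :=
  fun i j =>
    if (i.val = 5 ∧ j.val ≠ 5) ∨ (j.val = 5 ∧ i.val ≠ 5) then 1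
    else if i.val ≠ 5 ∧ j.val ≠ 5 ∧ ((i.val + 1) % 5 = j.val ∨ (j.val + 1) % 5 = i.val) then 1
    else 0
/-! ### Auxiliary development for `stmt6` -/

section Stmt6Aux

/-- The standard basis vector. -/
private def eVec (v : V) : V → ZMod 2 := fun w => if w = v then 1 else 0

/-- The `v`-th column of `A`. -/
private def aVec (A : Matrix V V (ZMod 2)) (v : V) : V → ZMod 2 := fun w => A w v

private lemma iasCol_zero (A : Matrix V V (ZMod 2)) (v : V) : iasCol A (v, 0) = eVec v := rfl

private lemma iasCol_one (A : Matrix V V (ZMod 2)) (v : V) : iasCol A (v, 1) = aVec A v := rfl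

private lemma iasCol_two (A : Matrix V V (ZMod 2)) (v : V) :
    iasCol A (v, 2) = aVec A v + eVec v := rfl

private lemma eVec_single (v : V) : eVec v = Pi.single v 1 := by
  funext w
  rw [Pi.single_apply]
  rfl

private lemma single_eq_smul_eVec (v : V) (c : ZMod 2) : Pi.single v c = c • eVec v := by
  funext w
  by_cases h : w = v <;> simp [eVec, Pi.single_apply, h]

private lemma ncard_eq_card (X : Set V) [Fintype ↥X] : X.ncard = Fintype.card ↥X := by
  rw [← Nat.card_coe_set_eq, Nat.card_eq_fintype_card]

private lemma tauSet_compl (X : Set V) : (tauSet X)ᶜ = tauSet (Xᶜ) := rfl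

/-- The span of the columns of a union of triples is spanned by the `eVec`s and `aVec`s. -/
private lemma span_tauSet (A : Matrix V V (ZMod 2)) (X : Set V) :
    Submodule.span (ZMod 2) (iasCol A '' tauSet X)
      = Submodule.span (ZMod 2) (eVec '' X ∪ aVec A '' X) := by
  apply le_antisymm
  · rw [Submodule.span_le]
    rintro _ ⟨⟨v, i⟩, hv, rfl⟩
    have he : eVec v ∈ Submodule.span (ZMod 2) (eVec '' X ∪ aVec A '' X) :=
      Submodule.subset_span (Or.inl ⟨v, hv, rfl⟩)
    have ha : aVec A v ∈ Submodule.span (ZMod 2) (eVec '' X ∪ aVec A '' X) :=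
      Submodule.subset_span (Or.inr ⟨v, hv, rfl⟩)
    fin_cases i
    · exact (iasCol_zero A v) ▸ he
    · exact (iasCol_one A v) ▸ ha
    · exact (iasCol_two A v) ▸ add_mem ha he
  · rw [Submodule.span_le]
    rintro _ (⟨v, hv, rfl⟩ | ⟨v, hv, rfl⟩)
    · exact Submodule.subset_span ⟨(v, 0), hv, iasCol_zero A v⟩
    · exact Submodule.subset_span ⟨(v, 1), hv, iasCol_one A v⟩

set_option synthInstance.maxHeartbeats 1000000 in
set_option maxHeartbeats 1000000 in
/-- `r(τ(X)) = |X| + c_G(X)`. -/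
private lemma rank_tauSet (A : Matrix V V (ZMod 2)) (X : Set V) :
    iasRank A (tauSet X) = X.ncard + cutRank A X := by
  classical
  haveI : Fintype ↥X := Fintype.ofFinite _
  set G : Set (V → ZMod 2) := eVec '' X ∪ aVec A '' X with hG
  set U : Submodule (ZMod 2) (V → ZMod 2) := Submodule.span (ZMod 2) G with hU
  set ρ : (V → ZMod 2) →ₗ[ZMod 2] (↥(Xᶜ) → ZMod 2) :=
    LinearMap.funLeft (ZMod 2) (ZMod 2) ((↑) : ↥(Xᶜ) → V) with hρ
  have hρ_e : ∀ v ∈ X, ρ (eVec v) = 0 := by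
    intro v hv
    funext w
    have hw : (w : V) ≠ v := fun h => w.2 (by rw [h]; exact hv)
    simp [hρ, LinearMap.funLeft, eVec, hw]
  have hρ_a : ∀ v : V, ρ (aVec A v) = fun w : ↥(Xᶜ) => A w.1 v := fun _ => rfl
  have hker : LinearMap.ker ρ = Submodule.span (ZMod 2) (eVec '' X) := by
    apply le_antisymm
    · intro f hf
      have hf' : ∀ w : ↥(Xᶜ), f w = 0 := fun w => congrFun (LinearMap.mem_ker.mp hf) w
      have hrepr : f = ∑ v : V, Pi.single v (f v) := (Finset.univ_sum_single f).symm
      rw [hrepr]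
      refine Submodule.sum_mem _ fun v _ => ?_
      by_cases hv : v ∈ X
      · rw [single_eq_smul_eVec]
        exact Submodule.smul_mem _ _ (Submodule.subset_span ⟨v, hv, rfl⟩)
      · have hzero : f v = 0 := hf' ⟨v, hv⟩
        rw [hzero, Pi.single_zero]
        exact zero_mem _
    · rw [Submodule.span_le]
      rintro _ ⟨v, hv, rfl⟩
      exact LinearMap.mem_ker.mpr (hρ_e v hv)
  have hkerle : LinearMap.ker ρ ≤ U := by
    rw [hker, hU]
    exact Submodule.span_mono Set.subset_union_left
  have hrn := LinearMap.finrank_range_add_finrank_ker (ρ.comp U.subtype)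
  have hrange : LinearMap.range (ρ.comp U.subtype)
      = Submodule.span (ZMod 2) ((fun x : V => fun w : ↥(Xᶜ) => A w.1 x) '' X) := by
    rw [LinearMap.range_comp, Submodule.range_subtype, hU, Submodule.map_span]
    apply le_antisymm
    · rw [Submodule.span_le]
      rintro _ ⟨u, hu, rfl⟩
      rcases hu with ⟨v, hv, rfl⟩ | ⟨v, hv, rfl⟩
      · rw [hρ_e v hv]
        exact zero_mem _
      · exact Submodule.subset_span ⟨v, hv, (hρ_a v).symm⟩
    · rw [Submodule.span_le]
      rintro _ ⟨v, hv, rfl⟩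
      exact Submodule.subset_span ⟨aVec A v, Or.inr ⟨v, hv, rfl⟩, hρ_a v⟩
  have hkerrank : Module.finrank (ZMod 2) (LinearMap.ker (ρ.comp U.subtype)) = X.ncard := by
    rw [LinearMap.ker_comp, (Submodule.comapSubtypeEquivOfLe hkerle).finrank_eq, hker]
    have himg : eVec '' X = Set.range (fun x : ↥X => eVec (x.1 : V)) :=
      Set.image_eq_range _ _
    have hli : LinearIndependent (ZMod 2) (fun x : ↥X => eVec (x.1 : V)) := by
      have h1 := (Pi.basisFun (ZMod 2) V).linearIndependent
      have h2 := h1.comp ((↑) : ↥X → V) Subtype.val_injective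
      have h3 : (fun x : ↥X => eVec (x.1 : V))
          = (⇑(Pi.basisFun (ZMod 2) V) ∘ ((↑) : ↥X → V)) := by
        funext x
        rw [Function.comp_apply, Pi.basisFun_apply]
        exact eVec_single x.1
      rw [h3]
      exact h2
    rw [himg, finrank_span_eq_card hli, ncard_eq_card]
  have hfin : iasRank A (tauSet X) = Module.finrank (ZMod 2) U := by
    unfold iasRank
    rw [span_tauSet]
  have hcut : cutRank A X
      = Module.finrank (ZMod 2)
          (Submodule.span (ZMod 2) ((fun x : V => fun w : ↥(Xᶜ) => A w.1 x) '' X)) := rfl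
  rw [hfin, ← hrn, hrange, hkerrank, hcut]
  omega

/-- `r(W(G)) = n`. -/
private lemma rank_univ (A : Matrix V V (ZMod 2)) :
    iasRank A Set.univ = Fintype.card V := by
  have hspan : Submodule.span (ZMod 2) (iasCol A '' Set.univ) = ⊤ := by
    rw [eq_top_iff]
    intro f _
    have hrepr : f = ∑ v : V, Pi.single v (f v) := (Finset.univ_sum_single f).symm
    rw [hrepr]
    refine Submodule.sum_mem _ fun v _ => ?_
    have he : eVec v ∈ Submodule.span (ZMod 2) (iasCol A '' Set.univ) :=
      Submodule.subset_span ⟨(v, 0), trivial, iasCol_zero A v⟩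
    rw [single_eq_smul_eVec]
    exact Submodule.smul_mem _ _ he
  unfold iasRank
  rw [hspan, finrank_top, Module.finrank_pi]

private lemma iasRank_mono (A : Matrix V V (ZMod 2)) {S T : Set (V × Fin 3)} (h : S ⊆ T) :
    iasRank A S ≤ iasRank A T :=
  Submodule.finrank_mono (Submodule.span_mono (Set.image_mono h))

private lemma card_le_rank_add_rank_compl (A : Matrix V V (ZMod 2)) (S : Set (V × Fin 3)) :
    Fintype.card V ≤ iasRank A S + iasRank A Sᶜ := by
  have hsup : Submodule.span (ZMod 2) (iasCol A '' Set.univ)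
      = Submodule.span (ZMod 2) (iasCol A '' S) ⊔ Submodule.span (ZMod 2) (iasCol A '' Sᶜ) := by
    rw [← Submodule.span_union, ← Set.image_union, Set.union_compl_self]
  have h1 := Submodule.finrank_sup_add_finrank_inf_eq
    (Submodule.span (ZMod 2) (iasCol A '' S)) (Submodule.span (ZMod 2) (iasCol A '' Sᶜ))
  have h2 : Fintype.card V = iasRank A Set.univ := (rank_univ A).symm
  have h3 : iasRank A Set.univ
      = Module.finrank (ZMod 2)
          ↥(Submodule.span (ZMod 2) (iasCol A '' S) ⊔ Submodule.span (ZMod 2) (iasCol A '' Sᶜ)) := by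
    unfold iasRank
    rw [hsup]
  unfold iasRank at *
  omega

/-- The set of vertices whose triple meets `S` at least twice. -/
private def bigSide (S : Set (V × Fin 3)) : Set V :=
  {v | ((v, 0) ∈ S ∧ (v, 1) ∈ S) ∨ ((v, 0) ∈ S ∧ (v, 2) ∈ S) ∨ ((v, 1) ∈ S ∧ (v, 2) ∈ S)}

private lemma add_add_cancel_left (f g : V → ZMod 2) : f + (f + g) = g := by
  funext w
  show f w + (f w + g w) = g w
  rw [← add_assoc, CharTwo.add_self_eq_zero, zero_add]

private lemma cols_mem_of_bigSide (A : Matrix V V (ZMod 2)) {S : Set (V × Fin 3)} {v : V}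
    (hv : v ∈ bigSide S) (i : Fin 3) :
    iasCol A (v, i) ∈ Submodule.span (ZMod 2) (iasCol A '' S) := by
  have mem : ∀ j : Fin 3, (v, j) ∈ S →
      iasCol A (v, j) ∈ Submodule.span (ZMod 2) (iasCol A '' S) :=
    fun j hj => Submodule.subset_span ⟨(v, j), hj, rfl⟩
  have h2eq : iasCol A (v, 2) = iasCol A (v, 1) + iasCol A (v, 0) := by
    rw [iasCol_zero, iasCol_one, iasCol_two]
  have h0eq : iasCol A (v, 0) = iasCol A (v, 1) + iasCol A (v, 2) := by
    rw [h2eq, add_add_cancel_left]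
  have h1eq : iasCol A (v, 1) = iasCol A (v, 0) + iasCol A (v, 2) := by
    rw [h2eq]
    funext w
    show _ = iasCol A (v, 0) w + (iasCol A (v, 1) w + iasCol A (v, 0) w)
    rw [add_comm (iasCol A (v, 1) w), ← add_assoc, CharTwo.add_self_eq_zero, zero_add]
  have key : (∀ j : Fin 3, iasCol A (v, j) ∈ Submodule.span (ZMod 2) (iasCol A '' S)) := by
    rcases hv with ⟨ha, hb⟩ | ⟨ha, hb⟩ | ⟨ha, hb⟩
    · have m2 : iasCol A (v, 2) ∈ Submodule.span (ZMod 2) (iasCol A '' S) := by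
        rw [h2eq]; exact add_mem (mem 1 hb) (mem 0 ha)
      intro j
      fin_cases j
      · exact mem 0 ha
      · exact mem 1 hb
      · exact m2
    · have m1 : iasCol A (v, 1) ∈ Submodule.span (ZMod 2) (iasCol A '' S) := by
        rw [h1eq]; exact add_mem (mem 0 ha) (mem 2 hb)
      intro j
      fin_cases j
      · exact mem 0 ha
      · exact m1
      · exact mem 2 hb
    · have m0 : iasCol A (v, 0) ∈ Submodule.span (ZMod 2) (iasCol A '' S) := by
        rw [h0eq]; exact add_mem (mem 1 ha) (mem 2 hb)
      intro j
      fin_cases j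
      · exact m0
      · exact mem 1 ha
      · exact mem 2 hb
  exact key i

private lemma rank_tau_bigSide_le (A : Matrix V V (ZMod 2)) (S : Set (V × Fin 3)) :
    iasRank A (tauSet (bigSide S)) ≤ iasRank A S := by
  apply Submodule.finrank_mono
  rw [Submodule.span_le]
  rintro _ ⟨⟨v, i⟩, hv, rfl⟩
  exact cols_mem_of_bigSide A hv i

private lemma compl_bigSide_subset (S : Set (V × Fin 3)) :
    (bigSide S)ᶜ ⊆ bigSide Sᶜ := by
  intro v hv
  simp only [bigSide, Set.mem_compl_iff, Set.mem_setOf_eq] at hv ⊢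
  by_cases h0 : (v, 0) ∈ S <;> by_cases h1 : (v, 1) ∈ S <;> by_cases h2 : (v, 2) ∈ S <;> tauto

private lemma cutRank_eq_rank (A : Matrix V V (ZMod 2)) (X : Set V)
    [Fintype ↥X] [Fintype ↥(Xᶜ)] :
    cutRank A X = (Matrix.of (fun w : ↥(Xᶜ) => fun x : ↥X => A w.1 x.1)).rank := by
  rw [Matrix.rank_eq_finrank_span_cols]
  have h : ((fun x : V => fun w : ↥(Xᶜ) => A w.1 x) '' X)
      = Set.range ((Matrix.of (fun w : ↥(Xᶜ) => fun x : ↥X => A w.1 x.1)).transpose) := by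
    rw [Set.image_eq_range]
    exact congrArg Set.range (funext fun x => funext fun w => rfl)
  show Module.finrank (ZMod 2)
      (Submodule.span (ZMod 2) ((fun x : V => fun w : ↥(Xᶜ) => A w.1 x) '' X)) = _
  rw [h]
  rfl

private lemma cutRank_le_ncard (A : Matrix V V (ZMod 2)) (X : Set V) :
    cutRank A X ≤ X.ncard := by
  classical
  haveI : Fintype ↥X := Fintype.ofFinite _
  haveI : Fintype ↥(Xᶜ) := Fintype.ofFinite _
  rw [cutRank_eq_rank, ncard_eq_card]
  exact Matrix.rank_le_card_width _

private lemma cutRank_le_ncard_compl (A : Matrix V V (ZMod 2)) (X : Set V) :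
    cutRank A X ≤ Xᶜ.ncard := by
  classical
  haveI : Fintype ↥X := Fintype.ofFinite _
  haveI : Fintype ↥(Xᶜ) := Fintype.ofFinite _
  rw [cutRank_eq_rank, ncard_eq_card]
  exact Matrix.rank_le_card_height _

private lemma cutRank_le_min (A : Matrix V V (ZMod 2)) (X : Set V) :
    cutRank A X ≤ min X.ncard Xᶜ.ncard :=
  le_min (cutRank_le_ncard A X) (cutRank_le_ncard_compl A X)

/-- `c_G(Xᶜ) = c_G(X)` for symmetric `A`. -/
private lemma cutRank_compl (A : Matrix V V (ZMod 2)) (hA : A.IsSymm) (X : Set V) :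
    cutRank A Xᶜ = cutRank A X := by
  classical
  haveI : Fintype ↥X := Fintype.ofFinite _
  haveI : Fintype ↥(Xᶜ) := Fintype.ofFinite _
  haveI : Fintype ↥(Xᶜᶜ) := Fintype.ofFinite _
  have hs : ∀ x y : V, A x y = A y x := fun x y => congrFun (congrFun hA y) x
  set M : Matrix ↥(Xᶜ) ↥X (ZMod 2) := Matrix.of (fun w : ↥(Xᶜ) => fun x : ↥X => A w.1 x.1)
    with hM
  set e : ↥X ≃ ↥(Xᶜᶜ) := Equiv.setCongr (compl_compl X).symm with he
  set φ : (↥(Xᶜᶜ) → ZMod 2) ≃ₗ[ZMod 2] (↥X → ZMod 2) :=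
    LinearEquiv.funCongrLeft (ZMod 2) (ZMod 2) e with hφ
  have hcomp : ((⇑(φ : (↥(Xᶜᶜ) → ZMod 2) ≃ₗ[ZMod 2] (↥X → ZMod 2)))
        ∘ (fun x : V => fun w : ↥(Xᶜᶜ) => A w.1 x))
      = fun x : V => fun w : ↥X => A w.1 x := by
    funext x w
    rfl
  have step1 : cutRank A Xᶜ
      = Module.finrank (ZMod 2)
          (Submodule.span (ZMod 2) ((fun x : V => fun w : ↥X => A w.1 x) '' Xᶜ)) := by
    show Module.finrank (ZMod 2)
        (Submodule.span (ZMod 2) ((fun x : V => fun w : ↥(Xᶜᶜ) => A w.1 x) '' Xᶜ)) = _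
    rw [← LinearEquiv.finrank_map_eq φ, Submodule.map_span, LinearEquiv.coe_coe,
      ← Set.image_comp, hcomp]
  have step2 : ((fun x : V => fun w : ↥X => A w.1 x) '' Xᶜ)
      = Set.range (fun w : ↥(Xᶜ) => fun x : ↥X => A w.1 x.1) := by
    rw [Set.image_eq_range]
    exact congrArg Set.range (funext fun p => funext fun q => hs q.1 p.1)
  have step3 : Module.finrank (ZMod 2)
      (Submodule.span (ZMod 2) (Set.range (fun w : ↥(Xᶜ) => fun x : ↥X => A w.1 x.1)))
      = Matrix.rank M.transpose := by
    rw [Matrix.rank_eq_finrank_span_cols]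
    rfl
  rw [step1, step2, step3, Matrix.rank_transpose, cutRank_eq_rank A X]

/-- Key lemma: a vertical `k`-separation yields a set `X` with small cut-rank. -/
private lemma exists_bad_of_verticalSep (A : Matrix V V (ZMod 2)) (hA : A.IsSymm)
    {k : ℕ} {S : Set (V × Fin 3)} (h : VerticalSep A k S) :
    ∃ X : Set V, 2 * cutRank A X < k ∧ cutRank A X < X.ncard ∧ cutRank A X < Xᶜ.ncard := by
  obtain ⟨hk, hlam, hS, hSc⟩ := h
  set X : Set V := bigSide S with hX
  refine ⟨X, ?_⟩
  have f1 : X.ncard + cutRank A X ≤ iasRank A S := by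
    rw [← rank_tauSet]
    exact rank_tau_bigSide_le A S
  have f2 : Xᶜ.ncard + cutRank A X ≤ iasRank A Sᶜ := by
    have h1 : iasRank A (tauSet Xᶜ) ≤ iasRank A (tauSet (bigSide Sᶜ)) :=
      iasRank_mono A (fun p hp => compl_bigSide_subset S hp)
    have h2 : iasRank A (tauSet (bigSide Sᶜ)) ≤ iasRank A Sᶜ := rank_tau_bigSide_le A Sᶜ
    have h3 : iasRank A (tauSet Xᶜ) = Xᶜ.ncard + cutRank A Xᶜ := rank_tauSet A Xᶜ
    rw [cutRank_compl A hA X] at h3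
    omega
  have f5 : X.ncard + Xᶜ.ncard = Fintype.card V := by
    rw [Set.ncard_add_ncard_compl X]
    exact Nat.card_eq_fintype_card
  have f6 : Fintype.card V ≤ iasRank A S + iasRank A Sᶜ := card_le_rank_add_rank_compl A S
  have f7 : iasLambda A S = iasRank A S + iasRank A Sᶜ - Fintype.card V := by
    unfold iasLambda
    rw [rank_univ]
  rw [f7] at hlam
  omega

/-- Key lemma: a two-sidedly non-full cut yields a vertical `(2c+1)`-separation. -/
private lemma verticalSep_of_bad (A : Matrix V V (ZMod 2)) (hA : A.IsSymm) {X : Set V}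
    (hx : cutRank A X < X.ncard) (hx' : cutRank A X < Xᶜ.ncard) :
    VerticalSep A (2 * cutRank A X + 1) (tauSet X) := by
  have f3 : iasRank A (tauSet X) = X.ncard + cutRank A X := rank_tauSet A X
  have f4 : iasRank A (tauSet X)ᶜ = Xᶜ.ncard + cutRank A X := by
    rw [tauSet_compl, rank_tauSet, cutRank_compl A hA X]
  have f5 : X.ncard + Xᶜ.ncard = Fintype.card V := by
    rw [Set.ncard_add_ncard_compl X]
    exact Nat.card_eq_fintype_card
  have f7 : iasLambda A (tauSet X)
      = iasRank A (tauSet X) + iasRank A (tauSet X)ᶜ - Fintype.card V := by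
    unfold iasLambda
    rw [rank_univ]
  refine ⟨by omega, by omega, by omega, by omega⟩

end Stmt6Aux

theorem stmt6 (A : Matrix V V (ZMod 2)) (hA : A.IsSymm) :
    ((∀ X : Set V, cutRank A X = min X.ncard Xᶜ.ncard) →
      iasKappa A = Fintype.card V) ∧
    ((∃ X : Set V, cutRank A X ≠ min X.ncard Xᶜ.ncard) →
      iasKappa A = 1 + 2 * sInf {c : ℕ |
        ∃ X : Set V, cutRank A X < min X.ncard Xᶜ.ncard ∧ cutRank A X = c}) := by
  constructor
  · -- all cuts are full: no vertical separations at all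
    intro hgood
    have hP : {k : ℕ | ∃ S, VerticalSep A k S} = ∅ := by
      ext k
      simp only [Set.mem_setOf_eq, Set.mem_empty_iff_false, iff_false, not_exists]
      intro S hS
      obtain ⟨X, _, h2, h3⟩ := exists_bad_of_verticalSep A hA hS
      have := hgood X
      have hlt : cutRank A X < min X.ncard Xᶜ.ncard := lt_min h2 h3
      omega
    unfold iasKappa
    rw [hP, Set.empty_union, rank_univ, csInf_singleton]
  · -- there is a non-full cut
    rintro ⟨X0, hX0⟩
    set T : Set ℕ := {c : ℕ | ∃ X : Set V, cutRank A X < min X.ncard Xᶜ.ncard ∧ cutRank A X = c}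
      with hT
    have hTne : T.Nonempty :=
      ⟨cutRank A X0, X0, lt_of_le_of_ne (cutRank_le_min A X0) hX0, rfl⟩
    obtain ⟨X1, hlt1, hc1⟩ := Nat.sInf_mem hTne
    have hx1 : cutRank A X1 < X1.ncard := lt_of_lt_of_le hlt1 (min_le_left _ _)
    have hx1' : cutRank A X1 < X1ᶜ.ncard := lt_of_lt_of_le hlt1 (min_le_right _ _)
    have hn1 : X1.ncard + X1ᶜ.ncard = Fintype.card V := by
      rw [Set.ncard_add_ncard_compl X1]
      exact Nat.card_eq_fintype_card
    unfold iasKappa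
    rw [rank_univ]
    apply le_antisymm
    · apply Nat.sInf_le
      left
      refine ⟨tauSet X1, ?_⟩
      have := verticalSep_of_bad A hA hx1 hx1'
      rw [hc1] at this
      rwa [add_comm] at this
    · apply le_csInf ⟨Fintype.card V, Or.inr rfl⟩
      rintro b (⟨S, hS⟩ | rfl)
      · obtain ⟨X2, h1, h2, h3⟩ := exists_bad_of_verticalSep A hA hS
        have hmem : cutRank A X2 ∈ T := ⟨X2, lt_min h2 h3, rfl⟩
        have hle := Nat.sInf_le hmem
        omega
      · omega
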